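/- Let k ≥ 2 and 0 < J < 2, and let s : ZMod k → {−1,+1} be any choice of signs. Then the point (1/2, …, 1/2) is the unique x ∈ ℝ^k with W(x) = 0, where W is the cyclic-interaction vector field. -/

import Mathlib

noncomputable def cycW (k : ℕ) (J : ℝ) (s : ZMod k → ℝ) (x : ZMod k → ℝ) :
    ZMod k → ℝ :=
  fun i =>
    Real.exp (s i * J * (x (i + 1) - 1 / 2)) -
      x i * (Real.exp (s i * J * (x (i + 1) - 1 / 2)) +
        Real.exp (-(s i * J * (x (i + 1) - 1 / 2))))

lemma sinh_le_mul_cosh {a : ℝ} (ha : 0 ≤ a) : Real.sinh a ≤ a * Real.cosh a := by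
  have hd : ∀ t : ℝ, HasDerivAt (fun t : ℝ => t * Real.cosh t - Real.sinh t)
      (t * Real.sinh t) t := by
    intro t
    have : HasDerivAt (fun t : ℝ => t * Real.cosh t - Real.sinh t)
        (1 * Real.cosh t + t * Real.sinh t - Real.cosh t) t :=
      ((hasDerivAt_id t).mul (Real.hasDerivAt_cosh t)).sub (Real.hasDerivAt_sinh t)
    simpa using this.congr_deriv (by ring)
  have h : MonotoneOn (fun t : ℝ => t * Real.cosh t - Real.sinh t) (Set.Ici 0) := by
    apply monotoneOn_of_deriv_nonneg (convex_Ici 0)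
    · exact (continuous_id.mul Real.continuous_cosh).sub Real.continuous_sinh |>.continuousOn
    · exact fun t _ => (hd t).differentiableAt.differentiableWithinAt
    · intro t ht
      rw [interior_Ici, Set.mem_Ioi] at ht
      rw [(hd t).deriv]
      have := Real.sinh_pos_iff (x := t) |>.2 ht
      nlinarith
  have := h (Set.self_mem_Ici) (Set.mem_Ici.2 ha) ha
  simp at this
  linarith

lemma abs_sinh_le : ∀ t : ℝ, |Real.sinh t| ≤ |t| * Real.cosh t := by
  intro t
  rw [Real.abs_sinh, ← Real.cosh_abs]
  exact sinh_le_mul_cosh (abs_nonneg t)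

/-- For `k ≥ 2` and `0 < J < 2`, whatever the signs, `(1/2,…,1/2)` is the unique
zero of the cyclic-interaction vector field. -/
theorem statement18 (k : ℕ) (hk : 2 ≤ k) (J : ℝ) (hJ0 : 0 < J) (hJ2 : J < 2)
    (s : ZMod k → ℝ) (hs : ∀ i, s i = 1 ∨ s i = -1) :
    {x : ZMod k → ℝ | cycW k J s x = 0} = {fun _ => 1 / 2} := by
  haveI : NeZero k := ⟨by omega⟩
  ext x
  simp only [Set.mem_setOf_eq, Set.mem_singleton_iff]
  constructor
  · intro hx
    -- key pointwise bound
    have key : ∀ i, |x i - 1/2| ≤ (J/2) * |x (i+1) - 1/2| := by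
      intro i
      have h0 : cycW k J s x i = 0 := congrFun hx i
      set t := s i * J * (x (i + 1) - 1 / 2) with ht
      have hcosh : Real.exp t + Real.exp (-t) = 2 * Real.cosh t := by
        rw [Real.cosh_eq]; ring
      have hsinh : Real.exp t - Real.exp (-t) = 2 * Real.sinh t := by
        rw [Real.sinh_eq]; ring
      have hcpos : (0:ℝ) < Real.cosh t := Real.cosh_pos t
      have hx_eq : x i - 1/2 = Real.sinh t / (2 * Real.cosh t) := by
        have h0' : Real.exp t - x i * (Real.exp t + Real.exp (-t)) = 0 := h0
        have h1 : Real.exp t = x i * (2 * Real.cosh t) := by rw [← hcosh]; linarith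
        field_simp
        linear_combination (hcosh + hsinh) / 2 - h1
      have habs : |x i - 1/2| = |Real.sinh t| / (2 * Real.cosh t) := by
        rw [hx_eq, abs_div, abs_of_pos (show (0:ℝ) < 2 * Real.cosh t by linarith)]
      rw [habs]
      have h1 : |Real.sinh t| ≤ |t| * Real.cosh t := abs_sinh_le t
      have h2 : |t| = J * |x (i+1) - 1/2| := by
        rw [ht, abs_mul, abs_mul]
        rcases hs i with h | h <;> rw [h] <;> simp [abs_of_pos hJ0]
      rw [div_le_iff₀ (by linarith)]
      calc |Real.sinh t| ≤ |t| * Real.cosh t := h1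
        _ = J/2 * |x (i+1) - 1/2| * (2 * Real.cosh t) := by rw [h2]; ring
    obtain ⟨i0, hi0⟩ := Finite.exists_max (fun i => |x i - 1/2|)
    have hM : |x i0 - 1/2| ≤ 0 := by
      have h1 := key i0
      have h2 := hi0 (i0 + 1)
      nlinarith [abs_nonneg (x i0 - 1/2)]
    funext i
    have := (hi0 i).trans hM
    have := abs_nonneg (x i - 1/2)
    have : |x i - 1/2| = 0 := le_antisymm ‹|x i - 1/2| ≤ 0› this
    have := abs_eq_zero.1 this
    linarith
  · intro hx
    subst hx
    funext i
    simp [cycW]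
    norm_num
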